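/- Let $V$ and $W$ be finite-dimensional vector spaces over a field $K$, let $f : V \to W$ be a linear map, and let $\pi : V^* \to V$ be a skew-symmetric linear map with graph $L_\pi = \{(\pi(\alpha), \alpha) \mid \alpha \in V^*\} \subseteq V \times V^*$. Then the pushforward $f_*L_\pi = \{(f(X), \beta) \in W \times W^* \mid (X, f^*\beta) \in L_\pi\}$ equals the graph of the skew-symmetric map $f \circ \pi \circ f^* : W^* \to W$; in particular it is a Lagrangian subspace of $W \times W^*$. (This is the fiberwise statement that a map between Poisson manifolds is forward-Dirac if and only if it pushes forward the bivector: $f_*\pi_M = \pi_N$.) -/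
import Mathlib


/-- The canonical symmetric pairing `⟨(X, α), (Y, β)⟩ = α(Y) + β(X)` on `V × V*`. -/
noncomputable def canPairing (K V : Type*) [Field K] [AddCommGroup V] [Module K V] :
    LinearMap.BilinForm K (V × Module.Dual K V) :=
  LinearMap.mk₂ K (fun p q => p.2 q.1 + q.2 p.1)
    (fun p p' q => by simp; ring)
    (fun c p q => by simp; ring)
    (fun p q q' => by simp; ring)
    (fun c p q => by simp; ring)

/-- The graph `{(π(α), α) | α ∈ V*} ⊆ V × V*` of a linear map `π : V* → V`
(a bivector, when `π` is skew-symmetric). -/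
noncomputable def bivectorGraph (K V : Type*) [Field K] [AddCommGroup V] [Module K V]
    (π : Module.Dual K V →ₗ[K] V) : Submodule K (V × Module.Dual K V) :=
  Submodule.map (π.prod LinearMap.id) ⊤

/-- The pushforward `f_*L = {(f(X), β) | (X, f^*β) ∈ L} ⊆ W × W*` of a subspace
`L ⊆ V × V*` along a linear map `f : V → W`. -/
noncomputable def diracPushforward {K V W : Type*} [Field K] [AddCommGroup V] [Module K V]
    [AddCommGroup W] [Module K W] (f : V →ₗ[K] W)
    (L : Submodule K (V × Module.Dual K V)) : Submodule K (W × Module.Dual K W) :=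
  Submodule.map (LinearMap.prodMap f (LinearMap.id : Module.Dual K W →ₗ[K] Module.Dual K W))
    (Submodule.comap (LinearMap.prodMap (LinearMap.id : V →ₗ[K] V) f.dualMap) L)


lemma mem_bivectorGraph {K V : Type*} [Field K] [AddCommGroup V] [Module K V]
    (π : Module.Dual K V →ₗ[K] V) (p : V × Module.Dual K V) :
    p ∈ bivectorGraph K V π ↔ p.1 = π p.2 := by
  constructor
  · rintro ⟨α, -, rfl⟩; rfl
  · intro h
    exact ⟨p.2, trivial, by simp [LinearMap.prod_apply, ← h]⟩

lemma graph_lagrangian {K V : Type*} [Field K] [AddCommGroup V] [Module K V]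
    [FiniteDimensional K V] (π : Module.Dual K V →ₗ[K] V)
    (hπ : ∀ α β : Module.Dual K V, α (π β) = - β (π α)) :
    bivectorGraph K V π = (canPairing K V).orthogonal (bivectorGraph K V π) := by
  ext ⟨y, β⟩
  rw [LinearMap.BilinForm.mem_orthogonal_iff, mem_bivectorGraph]
  constructor
  · intro hy n hn
    rw [mem_bivectorGraph] at hn
    obtain ⟨x, α⟩ := n
    simp only at hn
    subst hn
    simp only at hy
    simp only [LinearMap.BilinForm.IsOrtho, canPairing, LinearMap.mk₂_apply, hy, hπ α β]
    ring
  · intro h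
    have h2 : ∀ α : Module.Dual K V, α (y - π β) = 0 := by
      intro α
      have := h (π α, α) (by rw [mem_bivectorGraph])
      simp only [LinearMap.BilinForm.IsOrtho, canPairing, LinearMap.mk₂_apply] at this
      rw [map_sub, hπ α β, sub_neg_eq_add]
      exact this
    have := (Module.forall_dual_apply_eq_zero_iff K (y - π β)).mp h2
    rw [sub_eq_zero] at this
    exact this

/-- The pushforward of the graph `L_π` of a skew-symmetric map `π : V* → V` along a
linear map `f : V → W` is the graph of the skew-symmetric map `f ∘ π ∘ f^* : W* → W`;
in particular it is Lagrangian.  This is the fiberwise statement that a map of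
Poisson manifolds is forward-Dirac iff it pushes forward the bivector. -/
theorem stmt_13 (K V W : Type*) [Field K] [AddCommGroup V] [Module K V]
    [FiniteDimensional K V] [AddCommGroup W] [Module K W] [FiniteDimensional K W]
    (f : V →ₗ[K] W) (π : Module.Dual K V →ₗ[K] V)
    (hπ : ∀ α β : Module.Dual K V, α (π β) = - β (π α)) :
    diracPushforward f (bivectorGraph K V π) =
      bivectorGraph K W (f ∘ₗ π ∘ₗ f.dualMap) ∧
    diracPushforward f (bivectorGraph K V π) =
      (canPairing K W).orthogonal (diracPushforward f (bivectorGraph K V π)) := by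

  have h1 : diracPushforward f (bivectorGraph K V π) =
      bivectorGraph K W (f ∘ₗ π ∘ₗ f.dualMap) := by
    ext ⟨w, β⟩
    rw [mem_bivectorGraph]
    constructor
    · rintro ⟨⟨x, γ⟩, hx, hmap⟩
      rw [SetLike.mem_coe, Submodule.mem_comap, mem_bivectorGraph] at hx
      simp only [LinearMap.prodMap_apply, LinearMap.id_apply] at hx hmap
      simp only [Prod.mk.injEq] at hmap
      simp only [LinearMap.comp_apply, ← hmap.1, ← hmap.2, hx]
    · intro h
      refine ⟨(π (f.dualMap β), β), ?_, ?_⟩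
      · rw [SetLike.mem_coe, Submodule.mem_comap, mem_bivectorGraph]
        simp
      · simp only at h
        exact Prod.ext h.symm rfl
  refine ⟨h1, ?_⟩
  rw [h1]
  exact graph_lagrangian _ (fun α β => by
    exact hπ (f.dualMap α) (f.dualMap β))
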